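/- Let r ≥ 2, and let E be an evolution algebra over F of type [1, …, 1, n, 1, …, 1] (l ones, then n, then r ones) with natural basis {h_1, …, h_{l+n+r}} whose multiplication satisfies: h_i² = Σ_{j=i+1}^{l+n+r} α_{i,j} h_j for i = 1, …, l; h_{l+1}² = c h_{l+n+r} with c ≠ 0; h_{l+t}² = Σ_{j=l+n+1}^{l+n+r} α_{l+t,j} h_j for t = 2, …, n; h_{l+n+m}² = Σ_{j=l+n+m+1}^{l+n+r} α_{l+n+m,j} h_j for m = 1, …, r−1; and h_{l+n+r}² = 0. Then E is not isomorphic to E_{lr}(U, b, u) for any n-dimensional F-vector space U, nondegenerate symmetric bilinear form b on U, and nonzero u ∈ U. -/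

import Mathlib

variable {F : Type*} [Field F] {A : Type*} [AddCommGroup A] [Module F A]

/-- For a bilinear multiplication `mul` on `A` and a submodule `S`, the preimage in `A` of the
annihilator of `A/S`, i.e. `{x | x·A ⊆ S and A·x ⊆ S}`. -/
def annSucc (mul : A →ₗ[F] A →ₗ[F] A) (S : Submodule F A) : Submodule F A where
  carrier := {x | ∀ y : A, mul x y ∈ S ∧ mul y x ∈ S}
  zero_mem' := by intro y; simp
  add_mem' := by
    intro a b ha hb y
    refine ⟨?_, ?_⟩
    · simpa [map_add, LinearMap.add_apply] using S.add_mem (ha y).1 (hb y).1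
    · simpa [map_add, LinearMap.add_apply] using S.add_mem (ha y).2 (hb y).2
  smul_mem' := by
    intro c a ha y
    refine ⟨?_, ?_⟩
    · simpa [map_smul, LinearMap.smul_apply] using S.smul_mem c (ha y).1
    · simpa [map_smul, LinearMap.smul_apply] using S.smul_mem c (ha y).2

/-- The upper annihilating series: `annSeq mul 0 = 0`, and
`annSeq mul (i+1)` is the preimage in `A` of `ann(A / annSeq mul i)`. -/
def annSeq (mul : A →ₗ[F] A →ₗ[F] A) : ℕ → Submodule F A
  | 0 => ⊥
  | i + 1 => annSucc mul (annSeq mul i)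

/-- A basis is natural if the product of distinct basis vectors vanishes. -/
def IsNaturalBasis {ι : Type*} (mul : A →ₗ[F] A →ₗ[F] A) (e : Module.Basis ι F A) : Prop :=
  ∀ i j, i ≠ j → mul (e i) (e j) = 0

/-- An evolution algebra: a commutative algebra admitting a natural basis. -/
def IsEvolutionAlgebra (mul : A →ₗ[F] A →ₗ[F] A) : Prop :=
  (∀ x y, mul x y = mul y x) ∧ ∃ (n : ℕ) (e : Module.Basis (Fin n) F A), IsNaturalBasis mul e

/-- The (nilpotent) algebra `(A, mul)` has type `[n_1, …, n_r]`:  `r` is the least index with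
`ann^r(A) = A` and `n_i = dim ann^i(A) - dim ann^{i-1}(A)`. -/
def HasType (mul : A →ₗ[F] A →ₗ[F] A) (L : List ℕ) : Prop :=
  annSeq mul L.length = ⊤ ∧ (∀ j < L.length, annSeq mul j ≠ ⊤) ∧
  ∀ (i : ℕ) (h : i < L.length),
    L.get ⟨i, h⟩ =
      Module.finrank F (annSeq mul (i + 1)) - Module.finrank F (annSeq mul i)



section AuxLemmas

variable {F : Type*} [Field F] {A : Type*} [AddCommGroup A] [Module F A]

lemma mem_annSucc {mul : A →ₗ[F] A →ₗ[F] A} {S : Submodule F A} {x : A} :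
    x ∈ annSucc mul S ↔ ∀ y : A, mul x y ∈ S ∧ mul y x ∈ S := Iff.rfl

lemma annSeq_zero (mul : A →ₗ[F] A →ₗ[F] A) : annSeq mul 0 = ⊥ := rfl

lemma mem_annSeq_succ {mul : A →ₗ[F] A →ₗ[F] A} {m : ℕ} {x : A} :
    x ∈ annSeq mul (m + 1) ↔
      ∀ y : A, mul x y ∈ annSeq mul m ∧ mul y x ∈ annSeq mul m := Iff.rfl

lemma annSucc_mono (mul : A →ₗ[F] A →ₗ[F] A) {S T : Submodule F A} (hST : S ≤ T) :
    annSucc mul S ≤ annSucc mul T := by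
  intro x hx y
  exact ⟨hST (hx y).1, hST (hx y).2⟩

lemma annSeq_mono (mul : A →ₗ[F] A →ₗ[F] A) (m : ℕ) :
    annSeq mul m ≤ annSeq mul (m + 1) := by
  induction m with
  | zero => exact bot_le
  | succ k ih => exact annSucc_mono mul ih

lemma annSeq_stab (mul : A →ₗ[F] A →ₗ[F] A) (m : ℕ)
    (hm : annSeq mul (m + 1) = annSeq mul m) :
    ∀ k, annSeq mul (m + k) = annSeq mul m := by
  intro k
  induction k with
  | zero => rfl
  | succ j ih =>
    show annSucc mul (annSeq mul (m + j)) = _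
    rw [ih]
    exact hm

lemma map_annSeq {B : Type*} [AddCommGroup B] [Module F B]
    (mulA : A →ₗ[F] A →ₗ[F] A) (mulB : B →ₗ[F] B →ₗ[F] B) (φ : A ≃ₗ[F] B)
    (hφ : ∀ x y, φ (mulA x y) = mulB (φ x) (φ y)) :
    ∀ m x, x ∈ annSeq mulA m → φ x ∈ annSeq mulB m := by
  intro m
  induction m with
  | zero =>
    intro x hx
    have hx0 : x = 0 := by simpa [annSeq] using hx
    simp [hx0, annSeq]
  | succ k ih =>
    intro x hx q
    constructor
    · have h1 := ih _ (hx (φ.symm q)).1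
      rw [hφ] at h1
      simpa using h1
    · have h1 := ih _ (hx (φ.symm q)).2
      rw [hφ] at h1
      simpa using h1

lemma natural_mul {ι : Type*} [DecidableEq ι] {mul : A →ₗ[F] A →ₗ[F] A}
    {e : Module.Basis ι F A} (hnat : ∀ i j, i ≠ j → mul (e i) (e j) = 0) (i : ι) (y : A) :
    mul (e i) y = (e.repr y) i • mul (e i) (e i) := by
  have key : mul (e i) = LinearMap.smulRight (e.coord i) (mul (e i) (e i)) := by
    apply e.ext
    intro j
    by_cases hji : j = i
    · subst hji; simp
    · simp [hnat i j (fun hij => hji hij.symm), Module.Basis.coord_apply, Module.Basis.repr_self_apply, hji]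
  conv_lhs => rw [key]
  simp [Module.Basis.coord_apply]

end AuxLemmas

/-- (Here `l = a + 1`, `r = d + 1 ≥ 2`, indices 0-based.) An evolution algebra
of type `[1,…,1,n,1,…,1]` with natural basis `h_1,…,h_{l+n+r}` whose multiplication satisfies
`h_i² ∈ span{h_{i+1},…}` for `i ≤ l`, `h_{l+1}² = c h_{l+n+r}` with `c ≠ 0`,
`h_{l+t}² ∈ span{h_{l+n+1},…}` for `t = 2,…,n`, `h_{l+n+m}² ∈ span{h_{l+n+m+1},…}` for
`m = 1,…,r-1`, and `h_{l+n+r}² = 0`, is not isomorphic to `E_{lr}(U, b, u)` for any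
admissible `(U, b, u)`. -/
theorem concrete_r_ge_two_not_iso_Elr
    (F : Type*) [Field F] (h2 : (2 : F) ≠ 0)
    (a d n : ℕ) (hr : 1 ≤ d)  -- `r = d + 1 ≥ 2`
    {A : Type*} [AddCommGroup A] [Module F A]
    (mulA : A →ₗ[F] A →ₗ[F] A) (hcommA : ∀ x y : A, mulA x y = mulA y x)
    (h : Module.Basis (Fin (a + 1 + n + (d + 1))) F A)
    (hnat : IsNaturalBasis mulA h)
    (htype : HasType mulA (List.replicate (a + 1) 1 ++ n :: List.replicate (d + 1) 1))
    (hs1 : ∀ i : Fin (a + 1 + n + (d + 1)), (i : ℕ) < a + 1 →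
      ∀ j : Fin (a + 1 + n + (d + 1)), (j : ℕ) ≤ (i : ℕ) →
        h.repr (mulA (h i) (h i)) j = 0)
    (c : F) (hc : c ≠ 0)
    (hs2 : mulA (h ⟨a + 1, by omega⟩) (h ⟨a + 1, by omega⟩) =
      c • h ⟨a + 1 + n + d, by omega⟩)
    (hs3 : ∀ i : Fin (a + 1 + n + (d + 1)), a + 2 ≤ (i : ℕ) → (i : ℕ) < a + 1 + n →
      ∀ j : Fin (a + 1 + n + (d + 1)), (j : ℕ) < a + 1 + n →
        h.repr (mulA (h i) (h i)) j = 0)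
    (hs4 : ∀ i : Fin (a + 1 + n + (d + 1)), a + 1 + n ≤ (i : ℕ) →
      (i : ℕ) + 2 ≤ a + 1 + n + (d + 1) →
      ∀ j : Fin (a + 1 + n + (d + 1)), (j : ℕ) ≤ (i : ℕ) →
        h.repr (mulA (h i) (h i)) j = 0)
    (hs5 : mulA (h ⟨a + 1 + n + d, by omega⟩) (h ⟨a + 1 + n + d, by omega⟩) = 0) :
    ∀ (U : Type*) (_ : AddCommGroup U) (_ : Module F U),
      Module.finrank F U = n →
      ∀ b : U →ₗ[F] U →ₗ[F] F, (∀ x y : U, b x y = b y x) →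
        (∀ x : U, (∀ y : U, b x y = 0) → x = 0) →
      ∀ u : U, u ≠ 0 →
      ∀ mul' : ((Fin (a + 1) → F) × U × (Fin (d + 1) → F)) →ₗ[F]
          ((Fin (a + 1) → F) × U × (Fin (d + 1) → F)) →ₗ[F]
          ((Fin (a + 1) → F) × U × (Fin (d + 1) → F)),
        (∀ (α γ : Fin (a + 1) → F) (x y : U) (β δ : Fin (d + 1) → F),
          mul' (α, x, β) (γ, y, δ) =
            (Fin.cases (motive := fun _ => F) 0
                (fun j : Fin a => α j.castSucc * γ j.castSucc),
             (α (Fin.last a) * γ (Fin.last a)) • u,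
             Fin.cases (motive := fun _ => F) (b x y)
                (fun j : Fin d => β j.castSucc * δ j.castSucc))) →
        ¬ ∃ φ : A ≃ₗ[F] ((Fin (a + 1) → F) × U × (Fin (d + 1) → F)),
            ∀ x y, φ (mulA x y) = mul' (φ x) (φ y) := by

  intro U iAG iM hUn b hbsymm hbnd u hu mul' hmul'
  rintro ⟨φ, hφ⟩
  haveI : Module.Finite F A := Module.Finite.of_basis h
  rcases Nat.eq_zero_or_pos n with hn0 | hn
  · -- degenerate case n = 0 : the type list contains a 0 entry, impossible
    subst hn0
    have hlen : (List.replicate (a + 1) 1 ++ 0 :: List.replicate (d + 1) (1 : ℕ)).length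
        = a + 1 + (d + 2) := by simp
    have hidx : a + 1 < (List.replicate (a + 1) 1 ++ 0 :: List.replicate (d + 1) (1 : ℕ)).length := by
      rw [hlen]; omega
    have h0 := htype.2.2 (a + 1) hidx
    have hget : (List.replicate (a + 1) 1 ++ 0 :: List.replicate (d + 1) (1 : ℕ)).get
        ⟨a + 1, hidx⟩ = 0 := by
      simp [List.get_eq_getElem, List.getElem_append_right]
    rw [hget] at h0
    have hle : Module.finrank F (annSeq mulA (a + 1 + 1))
        ≤ Module.finrank F (annSeq mulA (a + 1)) :=
      Nat.sub_eq_zero_iff_le.mp h0.symm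
    have heq : annSeq mulA (a + 1) = annSeq mulA (a + 1 + 1) :=
      Submodule.eq_of_le_of_finrank_le (annSeq_mono mulA (a + 1)) hle
    have hstab := annSeq_stab mulA (a + 1) heq.symm (d + 2)
    have htop := htype.1
    rw [hlen] at htop
    rw [hstab] at htop
    exact htype.2.1 (a + 1) hidx htop
  · -- main case n ≥ 1
    have hann2mem : ∀ x : A, (∀ y, mulA x y ∈ annSeq mulA 1) → x ∈ annSeq mulA 2 := by
      intro x hx
      exact (mem_annSeq_succ (m := 1)).mpr fun y => ⟨hx y, by rw [hcommA y x]; exact hx y⟩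
    have h3sq : ∀ y, mulA (h ⟨a + 1 + n + d, by omega⟩) y = 0 := by
      intro y
      rw [natural_mul hnat, hs5, smul_zero]
    have h3m1 : h ⟨a + 1 + n + d, by omega⟩ ∈ annSeq mulA 1 := by
      refine (mem_annSeq_succ (m := 0)).mpr fun y => ⟨?_, ?_⟩
      · rw [h3sq y]; exact Submodule.zero_mem _
      · rw [hcommA y _, h3sq y]; exact Submodule.zero_mem _
    have h1m2 : h ⟨a + 1, by omega⟩ ∈ annSeq mulA 2 := by
      refine hann2mem _ fun y => ?_
      rw [natural_mul hnat, hs2]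
      exact Submodule.smul_mem _ _ (Submodule.smul_mem _ _ h3m1)
    have hsq2' : ∀ j : Fin (a + 1 + n + (d + 1)), j ≠ ⟨a + 1 + n + d, by omega⟩ →
        h.repr (mulA (h ⟨a + n + d, by omega⟩) (h ⟨a + n + d, by omega⟩)) j = 0 := by
      intro j hj
      have hjv : (j : ℕ) ≠ a + 1 + n + d := by
        intro e; exact hj (Fin.ext e)
      have hjlt := j.isLt
      refine hs4 ⟨a + n + d, by omega⟩ ?_ ?_ j ?_
      · show a + 1 + n ≤ a + n + d; omega
      · show a + n + d + 2 ≤ a + 1 + n + (d + 1); omega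
      · show (j : ℕ) ≤ a + n + d; omega
    have hsq2 : mulA (h ⟨a + n + d, by omega⟩) (h ⟨a + n + d, by omega⟩)
        ∈ annSeq mulA 1 := by
      have hrw : mulA (h ⟨a + n + d, by omega⟩) (h ⟨a + n + d, by omega⟩)
          = h.repr (mulA (h ⟨a + n + d, by omega⟩) (h ⟨a + n + d, by omega⟩))
              ⟨a + 1 + n + d, by omega⟩ • h ⟨a + 1 + n + d, by omega⟩ := by
        conv_lhs => rw [← h.sum_repr (mulA (h ⟨a + n + d, by omega⟩) (h ⟨a + n + d, by omega⟩))]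
        refine Finset.sum_eq_single_of_mem _ (Finset.mem_univ _) ?_
        intro j _ hj
        rw [hsq2' j hj, zero_smul]
      rw [hrw]
      exact Submodule.smul_mem _ _ h3m1
    have h2m2 : h ⟨a + n + d, by omega⟩ ∈ annSeq mulA 2 := by
      refine hann2mem _ fun y => ?_
      rw [natural_mul hnat]
      exact Submodule.smul_mem _ _ hsq2
    have h3m2 : h ⟨a + 1 + n + d, by omega⟩ ∈ annSeq mulA 2 := annSeq_mono mulA 1 h3m1
    -- the E_lr side
    have hV1 : ∀ p : (Fin (a + 1) → F) × U × (Fin (d + 1) → F), p ∈ annSeq mul' 1 →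
        p.1 = 0 ∧ p.2.1 = 0 ∧ ∀ j : Fin (d + 1), (j : ℕ) < d → p.2.2 j = 0 := by
      rintro ⟨p1, px, p2⟩ hp
      have hp' := (mem_annSeq_succ (m := 0)).mp hp
      have hpp : mul' (p1, px, p2) (p1, px, p2) = 0 := by
        have hm := (hp' (p1, px, p2)).1
        rwa [annSeq_zero, Submodule.mem_bot] at hm
      rw [hmul'] at hpp
      have e1 : (Fin.cases (motive := fun _ => F) 0
          (fun j : Fin a => p1 j.castSucc * p1 j.castSucc)) = (0 : Fin (a + 1) → F) :=
        congrArg Prod.fst hpp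
      have e2 : (p1 (Fin.last a) * p1 (Fin.last a)) • u = 0 :=
        congrArg (fun q => q.2.1) hpp
      have e3 : (Fin.cases (motive := fun _ => F) (b px px)
          (fun j : Fin d => p2 j.castSucc * p2 j.castSucc)) = (0 : Fin (d + 1) → F) :=
        congrArg (fun q => q.2.2) hpp
      refine ⟨?_, ?_, ?_⟩
      · funext k
        show p1 k = 0
        induction k using Fin.lastCases with
        | last =>
          rcases smul_eq_zero.mp e2 with h' | h'
          · exact mul_self_eq_zero.mp h'
          · exact absurd h' hu
        | cast j =>
          have hj := congrFun e1 j.succ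
          simp only [Fin.cases_succ, Pi.zero_apply] at hj
          exact mul_self_eq_zero.mp hj
      · refine hbnd _ fun y => ?_
        have hpy : mul' (p1, px, p2) (0, y, 0) = 0 := by
          have hm := (hp' (0, y, 0)).1
          rwa [annSeq_zero, Submodule.mem_bot] at hm
        rw [hmul'] at hpy
        have hj := congrFun (congrArg (fun q => q.2.2) hpy) 0
        simpa using hj
      · intro j hj
        have hje : j = (⟨(j : ℕ), hj⟩ : Fin d).castSucc := by
          apply Fin.ext; simp
        have hv := congrFun e3 (⟨(j : ℕ), hj⟩ : Fin d).succ
        simp only [Fin.cases_succ, Pi.zero_apply] at hv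
        rw [hje]
        exact mul_self_eq_zero.mp hv
    have hV2 : ∀ p : (Fin (a + 1) → F) × U × (Fin (d + 1) → F), p ∈ annSeq mul' 2 →
        p.1 = 0 ∧ p.2.1 = 0 ∧ ∀ j : Fin (d + 1), (j : ℕ) + 1 < d → p.2.2 j = 0 := by
      rintro ⟨p1, px, p2⟩ hp
      have hp' := (mem_annSeq_succ (m := 1)).mp hp
      have hz := hV1 _ (hp' (p1, px, p2)).1
      rw [hmul'] at hz
      have e1 : (Fin.cases (motive := fun _ => F) 0
          (fun j : Fin a => p1 j.castSucc * p1 j.castSucc)) = (0 : Fin (a + 1) → F) := hz.1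
      have e2 : (p1 (Fin.last a) * p1 (Fin.last a)) • u = 0 := hz.2.1
      have e3 : ∀ j : Fin (d + 1), (j : ℕ) < d →
          (Fin.cases (motive := fun _ => F) (b px px)
            (fun j : Fin d => p2 j.castSucc * p2 j.castSucc)) j = 0 := hz.2.2
      refine ⟨?_, ?_, ?_⟩
      · funext k
        show p1 k = 0
        induction k using Fin.lastCases with
        | last =>
          rcases smul_eq_zero.mp e2 with h' | h'
          · exact mul_self_eq_zero.mp h'
          · exact absurd h' hu
        | cast j =>
          have hj := congrFun e1 j.succ
          simp only [Fin.cases_succ, Pi.zero_apply] at hj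
          exact mul_self_eq_zero.mp hj
      · refine hbnd _ fun y => ?_
        have hy := hV1 _ (hp' (0, y, 0)).1
        rw [hmul'] at hy
        have hy0 := hy.2.2 0 (by simp only [Fin.val_zero]; omega)
        simpa using hy0
      · intro j hj
        have hje : j = (⟨(j : ℕ), by omega⟩ : Fin d).castSucc := by
          apply Fin.ext; simp
        have hv := e3 (⟨(j : ℕ), by omega⟩ : Fin d).succ (by simp only [Fin.val_succ]; omega)
        simp only [Fin.cases_succ] at hv
        rw [hje]
        exact mul_self_eq_zero.mp hv
    -- the coordinate-reading map ψ
    let ψ : ((Fin (a + 1) → F) × U × (Fin (d + 1) → F)) →ₗ[F] F × F :=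
      { toFun := fun p => (p.2.2 ⟨d - 1, by omega⟩, p.2.2 ⟨d, by omega⟩)
        map_add' := fun p q => rfl
        map_smul' := fun cc p => rfl }
    -- the three elements
    let idx : Fin 3 → Fin (a + 1 + n + (d + 1)) :=
      ![⟨a + 1, by omega⟩, ⟨a + n + d, by omega⟩, ⟨a + 1 + n + d, by omega⟩]
    have hidxdef : idx = ![⟨a + 1, by omega⟩, ⟨a + n + d, by omega⟩,
        ⟨a + 1 + n + d, by omega⟩] := rfl
    have hidxm : ∀ k, h (idx k) ∈ annSeq mulA 2 := by
      intro k
      fin_cases k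
      · exact h1m2
      · exact h2m2
      · exact h3m2
    have hinj : Function.Injective idx := by
      have hval : ∀ k : Fin 3, (idx k : ℕ) =
          if (k : ℕ) = 0 then a + 1 else if (k : ℕ) = 1 then a + n + d else a + 1 + n + d := by
        intro k; fin_cases k <;> simp [hidxdef]
      intro k l hkl
      have hv := congrArg Fin.val hkl
      rw [hval k, hval l] at hv
      have hk := k.isLt
      have hl := l.isLt
      apply Fin.ext
      split_ifs at hv <;> omega
    have key : ∀ g : Fin 3 → F,
        (∑ k : Fin 3, g k • ψ (φ (h (idx k)))) = 0 → ∀ k, g k = 0 := by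
      intro g hg
      have hx2 : φ (∑ j : Fin 3, g j • h (idx j)) ∈ annSeq mul' 2 := by
        have hrw : φ (∑ j : Fin 3, g j • h (idx j)) = ∑ j : Fin 3, g j • φ (h (idx j)) := by
          simp [map_sum, map_smul]
        rw [hrw]
        exact Submodule.sum_mem _ fun j _ => Submodule.smul_mem _ _
          (map_annSeq mulA mul' φ hφ 2 _ (hidxm j))
      have hψ0 : ψ (φ (∑ j : Fin 3, g j • h (idx j))) = 0 := by
        have hrw : ψ (φ (∑ j : Fin 3, g j • h (idx j)))
            = ∑ j : Fin 3, g j • ψ (φ (h (idx j))) := by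
          simp [map_sum, map_smul]
        rw [hrw]
        exact hg
      obtain ⟨q1, q2, q3⟩ := hV2 _ hx2
      have hc1 : (φ (∑ j : Fin 3, g j • h (idx j))).2.2 ⟨d - 1, by omega⟩ = 0 :=
        congrArg Prod.fst hψ0
      have hc2 : (φ (∑ j : Fin 3, g j • h (idx j))).2.2 ⟨d, by omega⟩ = 0 :=
        congrArg Prod.snd hψ0
      have hfun : (φ (∑ j : Fin 3, g j • h (idx j))).2.2 = 0 := by
        funext j
        show (φ (∑ j : Fin 3, g j • h (idx j))).2.2 j = 0
        have hcase : (j : ℕ) + 1 < d ∨ (j : ℕ) = d - 1 ∨ (j : ℕ) = d := by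
          have := j.isLt; omega
        rcases hcase with hc | hc | hc
        · exact q3 j hc
        · have hjj : j = (⟨d - 1, by omega⟩ : Fin (d + 1)) := Fin.ext hc
          rw [hjj]; exact hc1
        · have hjj : j = (⟨d, by omega⟩ : Fin (d + 1)) := Fin.ext hc
          rw [hjj]; exact hc2
      have hz0 : φ (∑ j : Fin 3, g j • h (idx j)) = 0 := by
        have hr1 : φ (∑ j : Fin 3, g j • h (idx j))
            = ((φ (∑ j : Fin 3, g j • h (idx j))).1,
               (φ (∑ j : Fin 3, g j • h (idx j))).2.1,
               (φ (∑ j : Fin 3, g j • h (idx j))).2.2) := rfl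
        rw [hr1, q1, q2, hfun]
        rfl
      have hsum : (∑ j : Fin 3, g j • h (idx j)) = 0 := φ.map_eq_zero_iff.mp hz0
      exact Fintype.linearIndependent_iff.mp (h.linearIndependent.comp idx hinj) g hsum
    have hli : LinearIndependent F (fun k : Fin 3 => ψ (φ (h (idx k)))) :=
      Fintype.linearIndependent_iff.mpr key
    have hcard := hli.fintype_card_le_finrank
    have hfr : Module.finrank F (F × F) = 2 := by
      rw [Module.finrank_prod, Module.finrank_self]
    rw [hfr] at hcard
    simp at hcard
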